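/- arXiv:2005.03287 — 2 statements merged into one kernel-verified Lean document; each statement's English description precedes it below -/
import Mathlib

section
/- A matrix M ∈ ℝ^{n×n} is a P-matrix if and only if the matrix M(I - D) + D is nonsingular for every diagonal matrix D = diag(d_i) with 0 ≤ d_i ≤ 1. -/
open Matrix

/-- A square real matrix is a `P`-matrix if all of its principal minors are positive. -/
def IsPMatrix {n : ℕ} (M : Matrix (Fin n) (Fin n) ℝ) : Prop :=
  ∀ s : Finset (Fin n), s.Nonempty →
    0 < (M.submatrix (fun i : s => (i : Fin n)) (fun i : s => (i : Fin n))).det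

/-- The (unordered) singular values of a real square matrix: square roots of the
eigenvalues of `Aᵀ * A`. -/
noncomputable def singVals {n : ℕ} (A : Matrix (Fin n) (Fin n) ℝ) : Fin n → ℝ :=
  fun i => Real.sqrt ((show (Aᵀ * A).IsHermitian by
    simpa [Matrix.conjTranspose_eq_transpose_of_trivial] using
      Matrix.isHermitian_conjTranspose_mul_self A).eigenvalues i)

/-- `svalsDecr A i` is the `i`-th largest singular value of `A` (so `svalsDecr A 0 = σ₁`). -/
noncomputable def svalsDecr {n : ℕ} (A : Matrix (Fin n) (Fin n) ℝ) : Fin n → ℝ :=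
  fun i => singVals A (Tuple.sort (singVals A) (Fin.rev i))

/-- The maximal singular value `σ₁`. -/
noncomputable def maxSV {n : ℕ} (A : Matrix (Fin n) (Fin n) ℝ) : ℝ :=
  ⨆ i, singVals A i

/-- The minimal singular value `σₙ`. -/
noncomputable def minSV {n : ℕ} (A : Matrix (Fin n) (Fin n) ℝ) : ℝ :=
  ⨅ i, singVals A i

/-- The spectral radius of a real square matrix (as the spectral radius of its
complexification), valued in `ℝ≥0∞`. -/
noncomputable def specRad {n : ℕ} (A : Matrix (Fin n) (Fin n) ℝ) : ENNReal :=
  spectralRadius ℂ (A.map (Complex.ofReal))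

open Finset in
private 
lemma det_piecewise_one {n : ℕ} (N : Matrix (Fin n) (Fin n) ℝ) (s : Finset (Fin n)) :
    (Matrix.det fun j => if j ∈ s then N j else (1 : Matrix (Fin n) (Fin n) ℝ) j)
      = (N.submatrix (fun i : s => (i : Fin n)) (fun i : s => (i : Fin n))).det := by
  classical
  let e : {x // x ∈ s} ⊕ {x // x ∉ s} ≃ Fin n := Equiv.sumCompl (· ∈ s)
  refine (Matrix.det_submatrix_equiv_self e _).symm.trans ?_
  have : (Matrix.submatrix (fun j => if j ∈ s then N j else (1 : Matrix (Fin n) (Fin n) ℝ) j) e e)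
      = Matrix.fromBlocks (N.submatrix (fun i : s => (i : Fin n)) (fun i : s => (i : Fin n)))
          (N.submatrix (fun i : s => (i : Fin n)) (fun i : {x // x ∉ s} => (i : Fin n))) 0 1 := by
    ext i j
    rcases i with i | i <;> rcases j with j | j <;>
      simp [e, Matrix.submatrix, Matrix.one_apply, Matrix.fromBlocks, i.2, j.2, Subtype.ext_iff]
    · exact if_neg fun h => i.2 (by rw [h]; exact j.2)
    · rfl
  rw [this, Matrix.det_fromBlocks_zero₂₁, Matrix.det_one, mul_one]

open Finset in
private lemma det_expansion {n : ℕ} (M : Matrix (Fin n) (Fin n) ℝ) (d : Fin n → ℝ) :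
    (M * (1 - Matrix.diagonal d) + Matrix.diagonal d).det
      = ∑ s : Finset (Fin n),
          ((∏ j ∈ s, (1 - d j)) * ∏ j ∈ sᶜ, d j) *
            (M.submatrix (fun i : s => (i : Fin n)) (fun i : s => (i : Fin n))).det := by
  classical
  rw [← Matrix.det_transpose]
  have hT : (M * (1 - Matrix.diagonal d) + Matrix.diagonal d)ᵀ
      = (fun j => (1 - d j) • Mᵀ j) + (fun j => d j • (1 : Matrix (Fin n) (Fin n) ℝ) j) := by
    funext j k
    simp [Matrix.transpose_apply, Matrix.mul_apply, Matrix.diagonal_apply, Matrix.one_apply,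
      Matrix.sub_apply, mul_ite, ite_mul, sub_mul, mul_sub]
    by_cases h : j = k
    · simp [h]; ring
    · simp [h, Ne.symm h]; ring
  rw [hT]
  have key := (Matrix.detRowAlternating :
      ((Fin n) → ℝ) [⋀^(Fin n)]→ₗ[ℝ] ℝ).toMultilinearMap.map_add_univ
      (fun j => (1 - d j) • Mᵀ j) (fun j => d j • (1 : Matrix (Fin n) (Fin n) ℝ) j)
  rw [show (Matrix.det ((fun j => (1 - d j) • Mᵀ j) + fun j => d j • (1 : Matrix (Fin n) (Fin n) ℝ) j)) = _ from key]
  refine Finset.sum_congr rfl fun s _ => ?_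
  have hp : s.piecewise (fun j => (1 - d j) • Mᵀ j) (fun j => d j • (1 : Matrix (Fin n) (Fin n) ℝ) j)
      = fun j => (if j ∈ s then (1 - d j) else d j) • (if j ∈ s then Mᵀ j else (1 : Matrix (Fin n) (Fin n) ℝ) j) := by
    funext j
    by_cases h : j ∈ s <;> simp [Finset.piecewise, h]
  rw [hp]
  have := (Matrix.detRowAlternating :
      ((Fin n) → ℝ) [⋀^(Fin n)]→ₗ[ℝ] ℝ).toMultilinearMap.map_smul_univ
      (fun j => if j ∈ s then (1 - d j) else d j)
      (fun j => if j ∈ s then Mᵀ j else (1 : Matrix (Fin n) (Fin n) ℝ) j)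
  rw [this]
  have hprod : (∏ j, (if j ∈ s then (1 - d j) else d j)) = (∏ j ∈ s, (1 - d j)) * ∏ j ∈ sᶜ, d j := by
    rw [Finset.prod_ite]
    congr 1
    · exact Finset.prod_congr (by ext x; simp) fun _ _ => rfl
    · exact Finset.prod_congr (by ext x; simp) fun _ _ => rfl
  rw [hprod, smul_eq_mul]
  congr 1
  have h3 : (Matrix.det fun j => if j ∈ s then Mᵀ j else (1 : Matrix (Fin n) (Fin n) ℝ) j)
      = (M.submatrix (fun i : s => (i : Fin n)) (fun i : s => (i : Fin n))).det := by
    rw [det_piecewise_one Mᵀ s,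
      show Mᵀ.submatrix (fun i : s => (i : Fin n)) (fun i : s => (i : Fin n))
        = (M.submatrix (fun i : s => (i : Fin n)) (fun i : s => (i : Fin n)))ᵀ from rfl,
      Matrix.det_transpose]
  exact h3

open Finset in
private lemma minor_pos {n : ℕ} {M : Matrix (Fin n) (Fin n) ℝ} (hP : IsPMatrix M)
    (s : Finset (Fin n)) :
    0 < (M.submatrix (fun i : s => (i : Fin n)) (fun i : s => (i : Fin n))).det := by
  rcases s.eq_empty_or_nonempty with rfl | h
  · haveI : IsEmpty {x // x ∈ (∅ : Finset (Fin n))} := by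
      rw [Finset.isEmpty_coe_sort]
    rw [Matrix.det_isEmpty]; norm_num
  · exact hP s h

theorem stmt1 {n : ℕ} (M : Matrix (Fin n) (Fin n) ℝ) :
    IsPMatrix M ↔
      ∀ d : Fin n → ℝ, (∀ i, d i ∈ Set.Icc (0 : ℝ) 1) →
        IsUnit (M * (1 - Matrix.diagonal d) + Matrix.diagonal d) := by
  classical
  constructor
  · intro hP d hd
    rw [Matrix.isUnit_iff_isUnit_det, isUnit_iff_ne_zero]
    have hpos : 0 < (M * (1 - Matrix.diagonal d) + Matrix.diagonal d).det := by
      rw [det_expansion]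
      apply Finset.sum_pos'
      · intro S _
        have h1 : 0 ≤ ∏ j ∈ S, (1 - d j) :=
          Finset.prod_nonneg fun j _ => by linarith [(hd j).2]
        have h2 : 0 ≤ ∏ j ∈ Sᶜ, d j := Finset.prod_nonneg fun j _ => (hd j).1
        exact mul_nonneg (mul_nonneg h1 h2) (minor_pos hP S).le
      · refine ⟨Finset.univ.filter (fun j => d j < 1), Finset.mem_univ _, ?_⟩
        have h1 : 0 < ∏ j ∈ Finset.univ.filter (fun j => d j < 1), (1 - d j) :=
          Finset.prod_pos fun j hj => by
            have := (Finset.mem_filter.mp hj).2; linarith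
        have h2 : (∏ j ∈ (Finset.univ.filter (fun j => d j < 1))ᶜ, d j) = 1 :=
          Finset.prod_eq_one fun j hj => by
            have hj' : ¬ d j < 1 := by
              simpa using (Finset.mem_compl.mp hj)
            have := (hd j).2
            linarith
        rw [h2, mul_one]
        exact mul_pos h1 (minor_pos hP _)
    exact ne_of_gt hpos
  · intro h s hs
    by_contra hle
    rw [not_lt] at hle
    set dd : ℝ → Fin n → ℝ := fun t j => if j ∈ s then t else 1 with hdd
    set f : ℝ → ℝ := fun t =>
      (M * (1 - Matrix.diagonal (dd t)) + Matrix.diagonal (dd t)).det with hf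
    have hcont : Continuous f := by
      apply Continuous.matrix_det
      apply Continuous.add
      · apply Continuous.matrix_mul continuous_const
        apply Continuous.sub continuous_const
        apply Continuous.matrix_diagonal
        apply continuous_pi
        intro j
        by_cases hj : j ∈ s <;> simp [dd, hj] <;> [exact continuous_id; exact continuous_const]
      · apply Continuous.matrix_diagonal
        apply continuous_pi
        intro j
        by_cases hj : j ∈ s <;> simp [dd, hj] <;> [exact continuous_id; exact continuous_const]
    have hf1 : f 1 = 1 := by
      have hd1 : dd 1 = fun _ => 1 := by funext j; simp [dd]
      simp only [hf, hd1]
      rw [Matrix.diagonal_one, sub_self, Matrix.mul_zero, zero_add, Matrix.det_one]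
    have hf0 : f 0 =
        (M.submatrix (fun i : s => (i : Fin n)) (fun i : s => (i : Fin n))).det := by
      simp only [hf]
      rw [det_expansion]
      rw [Finset.sum_eq_single s]
      · have c1 : (∏ j ∈ s, (1 - dd 0 j)) = 1 :=
          Finset.prod_eq_one fun j hj => by simp [dd, hj]
        have c2 : (∏ j ∈ sᶜ, dd 0 j) = 1 :=
          Finset.prod_eq_one fun j hj => by simp [dd, Finset.mem_compl.mp hj]
        rw [c1, c2, one_mul, one_mul]
      · intro S _ hSne
        by_cases hsub : S ⊆ s
        · obtain ⟨j, hjs, hjS⟩ : ∃ j ∈ s, j ∉ S := by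
            by_contra hc
            push_neg at hc
            exact hSne (Finset.Subset.antisymm hsub hc)
          have : (∏ j ∈ Sᶜ, dd 0 j) = 0 :=
            Finset.prod_eq_zero (Finset.mem_compl.mpr hjS) (by simp [dd, hjs])
          rw [this, mul_zero, zero_mul]
        · obtain ⟨j, hjS, hjs⟩ := Finset.not_subset.mp hsub
          have : (∏ j ∈ S, (1 - dd 0 j)) = 0 :=
            Finset.prod_eq_zero hjS (by simp [dd, hjs])
          rw [this, zero_mul, zero_mul]
      · intro hsu; exact absurd (Finset.mem_univ s) hsu
    have hmem : (0 : ℝ) ∈ Set.Icc (f 0) (f 1) := by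
      constructor
      · rw [hf0]; exact hle
      · rw [hf1]; norm_num
    obtain ⟨t, ht, hft⟩ :=
      intermediate_value_Icc (by norm_num : (0:ℝ) ≤ 1) hcont.continuousOn hmem
    have hdmem : ∀ i, dd t i ∈ Set.Icc (0 : ℝ) 1 := by
      intro i
      by_cases hi : i ∈ s <;> simp [dd, hi]
      · exact ⟨ht.1, ht.2⟩
    have hu := h (dd t) hdmem
    rw [Matrix.isUnit_iff_isUnit_det] at hu
    exact hu.ne_zero hft
end

section
/- If B ∈ ℝ^{n×n} is nonsingular and σ_n(B^{-1}A) > 1 (the smallest singular value of B^{-1}A exceeds 1), then the GAVE Ax + B|x| = b has a unique solution for every b ∈ ℝ^n. -/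
open Matrix

theorem isHermitian_transpose_mul_self' {n : ℕ} (A : Matrix (Fin n) (Fin n) ℝ) :
    (Aᵀ * A).IsHermitian := by
  simpa [Matrix.conjTranspose_eq_transpose_of_trivial] using
    Matrix.isHermitian_conjTranspose_mul_self A

-- quadratic form lower bound
lemma quad_lower {n : ℕ} (C : Matrix (Fin n) (Fin n) ℝ) (μ : ℝ) (hμ0 : 0 ≤ μ)
    (hev : ∀ i, μ ^ 2 ≤ (isHermitian_transpose_mul_self' C).eigenvalues i)
    (x : Fin n → ℝ) :
    μ ^ 2 * (∑ i, x i ^ 2) ≤ ∑ i, (C *ᵥ x) i ^ 2 := by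
  have hM := isHermitian_transpose_mul_self' C
  set U : Matrix (Fin n) (Fin n) ℝ := (hM.eigenvectorUnitary : Matrix (Fin n) (Fin n) ℝ) with hU
  have hstar : star U = Uᵀ := by
    rw [Matrix.star_eq_conjTranspose, Matrix.conjTranspose_eq_transpose_of_trivial]
  have hUU : U * Uᵀ = 1 := by
    rw [← hstar]; exact (Matrix.mem_unitaryGroup_iff).mp hM.eigenvectorUnitary.2
  set y : Fin n → ℝ := Uᵀ *ᵥ x with hy
  have h1 : ∑ i, (C *ᵥ x) i ^ 2 = ∑ i, hM.eigenvalues i * y i ^ 2 := by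
    have e1 : ∑ i, (C *ᵥ x) i ^ 2 = (C *ᵥ x) ⬝ᵥ (C *ᵥ x) := by
      simp [dotProduct, sq]
    have e2 : (C *ᵥ x) ⬝ᵥ (C *ᵥ x) = x ⬝ᵥ ((Cᴴ * C) *ᵥ x) := by
      rw [Matrix.conjTranspose_eq_transpose_of_trivial, ← Matrix.mulVec_mulVec,
        Matrix.dotProduct_mulVec x, Matrix.vecMul_transpose]
    rw [e1, e2]
    conv_lhs => rw [Matrix.conjTranspose_eq_transpose_of_trivial, hM.spectral_theorem,
      Unitary.conjStarAlgAut_apply]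
    rw [hstar, Matrix.mul_assoc, ← Matrix.mulVec_mulVec, Matrix.dotProduct_mulVec x,
      ← Matrix.mulVec_transpose, ← hy, ← Matrix.mulVec_mulVec]
    simp only [dotProduct, Matrix.mulVec_diagonal, Function.comp_apply,
      RCLike.ofReal_real_eq_id, id_eq]
    exact Finset.sum_congr rfl fun i _ => by ring
  have h2 : ∑ i, x i ^ 2 = ∑ i, y i ^ 2 := by
    have e1 : ∑ i, y i ^ 2 = y ⬝ᵥ y := by simp [dotProduct, sq]
    have e2 : y ⬝ᵥ y = ((U * Uᵀ) *ᵥ x) ⬝ᵥ x := by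
      rw [hy, Matrix.dotProduct_mulVec, Matrix.vecMul_transpose, Matrix.mulVec_mulVec]
    rw [e1, e2, hUU, Matrix.one_mulVec]
    simp [dotProduct, sq]
  rw [h1, h2, Finset.mul_sum]
  refine Finset.sum_le_sum fun i _ => ?_
  exact mul_le_mul_of_nonneg_right (hev i) (sq_nonneg _)

noncomputable def minSV_aux {n : ℕ} (A : Matrix (Fin n) (Fin n) ℝ) : ℝ :=
  ⨅ i, (fun i => Real.sqrt ((isHermitian_transpose_mul_self' A).eigenvalues i)) i

theorem stmt14_aux {n : ℕ} (A B : Matrix (Fin n) (Fin n) ℝ) (hB : IsUnit B)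
    (h : 1 < minSV_aux (B⁻¹ * A)) :
    ∀ b : Fin n → ℝ, ∃! x : Fin n → ℝ, A *ᵥ x + B *ᵥ |x| = b := by
  rcases Nat.eq_zero_or_pos n with hn | hn
  · subst hn
    intro b
    exact ⟨0, funext fun i => i.elim0, fun y _ => funext fun i => i.elim0⟩
  haveI : NeZero n := ⟨hn.ne'⟩
  set C : Matrix (Fin n) (Fin n) ℝ := B⁻¹ * A with hC
  set μ : ℝ := minSV_aux C with hμ
  have hμ1 : 1 < μ := h
  have hμ0 : 0 < μ := lt_trans one_pos hμ1
  set sv : Fin n → ℝ := fun i =>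
    Real.sqrt ((isHermitian_transpose_mul_self' C).eigenvalues i) with hsv
  have hlow : ∀ i, μ ≤ sv i := fun i =>
    ciInf_le (Set.finite_range _).bddBelow i
  have hev : ∀ i, μ ^ 2 ≤ (isHermitian_transpose_mul_self' C).eigenvalues i := by
    intro i
    have h1 : μ ≤ sv i := hlow i
    have h2 : 0 < (isHermitian_transpose_mul_self' C).eigenvalues i := by
      have := lt_of_lt_of_le hμ0 h1
      exact Real.sqrt_pos.mp this
    calc μ ^ 2 ≤ sv i ^ 2 := pow_le_pow_left₀ hμ0.le h1 2
    _ = _ := Real.sq_sqrt h2.le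
  -- Euclidean-type norm on plain functions
  set N : (Fin n → ℝ) → ℝ := fun v => Real.sqrt (∑ i, v i ^ 2) with hN
  have hN0 : ∀ v, 0 ≤ N v := fun v => Real.sqrt_nonneg _
  have hNzero : ∀ v, N v = 0 → v = 0 := by
    intro v hv
    have hsum : ∑ i, v i ^ 2 = 0 := by
      by_contra hne
      have hpos : 0 < ∑ i, v i ^ 2 :=
        lt_of_le_of_ne (Finset.sum_nonneg fun i _ => sq_nonneg _) (Ne.symm hne)
      exact absurd hv (ne_of_gt (Real.sqrt_pos.mpr hpos))
    funext i
    have := (Finset.sum_eq_zero_iff_of_nonneg (fun i _ => sq_nonneg (v i))).mp hsum i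
      (Finset.mem_univ i)
    exact pow_eq_zero_iff (two_ne_zero) |>.mp this
  have keyN : ∀ x : Fin n → ℝ, μ * N x ≤ N (C *ᵥ x) := by
    intro x
    have := quad_lower C μ hμ0.le hev x
    calc μ * N x = Real.sqrt (μ ^ 2 * ∑ i, x i ^ 2) := by
          rw [Real.sqrt_mul (sq_nonneg μ), Real.sqrt_sq hμ0.le]
    _ ≤ _ := Real.sqrt_le_sqrt this
  -- C is invertible
  have hCinj : Function.Injective (C.mulVec) := by
    intro u v huv
    have hz : C *ᵥ (u - v) = 0 := by rw [Matrix.mulVec_sub, huv, sub_self]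
    have h1 : μ * N (u - v) ≤ 0 := by
      have := keyN (u - v); rwa [hz, show N 0 = 0 by simp [hN]] at this
    have h2 : N (u - v) = 0 :=
      le_antisymm (nonpos_of_mul_nonpos_right h1 hμ0) (hN0 _)
    have := hNzero _ h2
    exact sub_eq_zero.mp this
  have hCunit : IsUnit C := Matrix.mulVec_injective_iff_isUnit.mp hCinj
  have hCdet : IsUnit C.det := (Matrix.isUnit_iff_isUnit_det C).mp hCunit
  set D : Matrix (Fin n) (Fin n) ℝ := C⁻¹ with hD
  have hCD : C * D = 1 := Matrix.mul_nonsing_inv C hCdet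
  have hDC : D * C = 1 := Matrix.nonsing_inv_mul C hCdet
  have keyD : ∀ v, N (D *ᵥ v) ≤ μ⁻¹ * N v := by
    intro v
    have h1 : μ * N (D *ᵥ v) ≤ N v := by
      have := keyN (D *ᵥ v)
      rwa [Matrix.mulVec_mulVec, hCD, Matrix.one_mulVec] at this
    rw [← le_div_iff₀' hμ0, div_eq_inv_mul] at h1
    exact h1
  have Nabs : ∀ x y : Fin n → ℝ, N (|x| - |y|) ≤ N (x - y) := by
    intro x y
    apply Real.sqrt_le_sqrt
    apply Finset.sum_le_sum
    intro i _
    have : |(|x| - |y|) i| ≤ |(x - y) i| := by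
      simp only [Pi.sub_apply, Pi.abs_apply]
      exact abs_abs_sub_abs_le_abs_sub _ _
    calc (|x| - |y|) i ^ 2 = |(|x| - |y|) i| ^ 2 := (sq_abs _).symm
    _ ≤ |(x - y) i| ^ 2 := pow_le_pow_left₀ (abs_nonneg _) this 2
    _ = (x - y) i ^ 2 := sq_abs _
  intro b
  set d : Fin n → ℝ := B⁻¹ *ᵥ b with hd
  have hBdet : IsUnit B.det := (Matrix.isUnit_iff_isUnit_det B).mp hB
  have hBB : B * B⁻¹ = 1 := Matrix.mul_nonsing_inv B hBdet
  have hBiB : B⁻¹ * B = 1 := Matrix.nonsing_inv_mul B hBdet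
  have heq : ∀ x : Fin n → ℝ, (A *ᵥ x + B *ᵥ |x| = b) ↔ x = D *ᵥ (d - |x|) := by
    intro x
    constructor
    · intro hx
      have h1 : B⁻¹ *ᵥ (A *ᵥ x + B *ᵥ |x|) = d := by rw [hx]
      rw [Matrix.mulVec_add, Matrix.mulVec_mulVec, Matrix.mulVec_mulVec, hBiB,
        Matrix.one_mulVec, ← hC] at h1
      have h2 : C *ᵥ x = d - |x| := eq_sub_of_add_eq h1
      have h3 : D *ᵥ (C *ᵥ x) = D *ᵥ (d - |x|) := by rw [h2]
      rwa [Matrix.mulVec_mulVec, hDC, Matrix.one_mulVec] at h3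
    · intro hx
      have h2 : C *ᵥ x = d - |x| := by
        conv_lhs => rw [hx]
        rw [Matrix.mulVec_mulVec, hCD, Matrix.one_mulVec]
      have h1 : C *ᵥ x + |x| = d := by rw [h2, sub_add_cancel]
      have h4 := congrArg (fun v => B *ᵥ v) h1
      simp only [Matrix.mulVec_add, Matrix.mulVec_mulVec] at h4
      rw [hC, ← Matrix.mul_assoc, hBB, Matrix.one_mul, hd, Matrix.mulVec_mulVec, hBB,
        Matrix.one_mulVec] at h4
      exact h4
  -- contraction on EuclideanSpace
  set e : (Fin n → ℝ) ≃ EuclideanSpace ℝ (Fin n) := (WithLp.equiv 2 (Fin n → ℝ)).symm with he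
  have hesub : ∀ a b : Fin n → ℝ, e a - e b = e (a - b) := fun a b => rfl
  have hnorm : ∀ v : Fin n → ℝ, ‖e v‖ = N v := by
    intro v
    rw [EuclideanSpace.norm_eq, hN]
    congr 1
    exact Finset.sum_congr rfl fun i _ => by
      rw [Real.norm_eq_abs, sq_abs]; rfl
  set T : EuclideanSpace ℝ (Fin n) → EuclideanSpace ℝ (Fin n) :=
    fun x => e (D *ᵥ (d - |e.symm x|)) with hT
  have hK1 : (⟨μ⁻¹, by positivity⟩ : NNReal) < 1 := by
    show μ⁻¹ < 1
    exact inv_lt_one_of_one_lt₀ hμ1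
  have hcontr : ContractingWith ⟨μ⁻¹, by positivity⟩ T := by
    refine ⟨hK1, LipschitzWith.of_dist_le_mul fun x y => ?_⟩
    rw [dist_eq_norm, dist_eq_norm]
    change _ ≤ μ⁻¹ * _
    have hsub : T x - T y = e (D *ᵥ (|e.symm y| - |e.symm x|)) := by
      rw [hT]
      simp only
      rw [hesub]
      congr 1
      rw [← Matrix.mulVec_sub]
      congr 1
      abel
    rw [hsub, hnorm]
    calc N (D *ᵥ (|e.symm y| - |e.symm x|)) ≤ μ⁻¹ * N (|e.symm y| - |e.symm x|) := keyD _
    _ ≤ μ⁻¹ * N (e.symm y - e.symm x) := by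
        exact mul_le_mul_of_nonneg_left (Nabs _ _) (by positivity)
    _ = μ⁻¹ * ‖x - y‖ := by
        rw [← hnorm, ← hesub, e.apply_symm_apply, e.apply_symm_apply, norm_sub_rev]
  set F : EuclideanSpace ℝ (Fin n) := ContractingWith.fixedPoint T hcontr with hF
  have hFfix : T F = F := ContractingWith.fixedPoint_isFixedPt hcontr
  refine ⟨e.symm F, ?_, ?_⟩
  · show A *ᵥ (e.symm F) + B *ᵥ |e.symm F| = b
    rw [heq]
    have := congrArg e.symm hFfix
    rw [hT] at this
    simpa using this.symm
  · intro y hy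
    rw [heq] at hy
    have hyfix : T (e y) = e y := by
      rw [hT]
      simp only [e.symm_apply_apply]
      rw [← hy]
    have h5 := ContractingWith.fixedPoint_unique hcontr hyfix
    rw [← hF] at h5
    rw [← h5, e.symm_apply_apply]


theorem stmt14 {n : ℕ} (A B : Matrix (Fin n) (Fin n) ℝ) (hB : IsUnit B)
    (h : 1 < minSV (B⁻¹ * A)) :
    ∀ b : Fin n → ℝ, ∃! x : Fin n → ℝ, A *ᵥ x + B *ᵥ |x| = b :=
  stmt14_aux A B hB h
end
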